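/- Let N ≥ 6 be an integer. There exists a constant C > 0 such that for all real numbers k, l: |F(k+l) − F(k) − f(k)l − (1/2) f'(k) l²| ≤ C |l|^{2N/(N−2)}, where F(u) = ((N−2)/(2N))|u|^{2N/(N−2)}, f(u) = |u|^{4/(N−2)}u and f'(u) = ((N+2)/(N−2))|u|^{4/(N−2)}. -/

import Mathlib

open Real

section aux

open Set Filter

lemma rpow_add_le_add_rpow' {x y α : ℝ} (hx : 0 ≤ x) (hy : 0 ≤ y) (hα : 0 ≤ α) (hα1 : α ≤ 1) :
    (x + y) ^ α ≤ x ^ α + y ^ α := by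
  lift x to NNReal using hx
  lift y to NNReal using hy
  rw [← NNReal.coe_add, ← NNReal.coe_rpow, ← NNReal.coe_rpow, ← NNReal.coe_rpow,
    ← NNReal.coe_add, NNReal.coe_le_coe]
  exact NNReal.rpow_add_le_add_rpow x y hα hα1

lemma abs_rpow_holder {α : ℝ} (hα : 0 ≤ α) (hα1 : α ≤ 1) (a b : ℝ) :
    |(|a| ^ α - |b| ^ α)| ≤ |a - b| ^ α := by
  have key : ∀ x y : ℝ, |x| ^ α - |y| ^ α ≤ |x - y| ^ α := by
    intro x y
    have h1 : |x| ≤ |y| + |x - y| := by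
      have := abs_sub_abs_le_abs_sub x y
      linarith
    have h2 : |x| ^ α ≤ (|y| + |x - y|) ^ α :=
      Real.rpow_le_rpow (abs_nonneg _) h1 hα
    have h3 : (|y| + |x - y|) ^ α ≤ |y| ^ α + |x - y| ^ α :=
      rpow_add_le_add_rpow' (abs_nonneg _) (abs_nonneg _) hα hα1
    linarith
  rw [abs_sub_le_iff]
  constructor
  · linarith [key a b]
  · have := key b a
    rwa [abs_sub_comm] at this

lemma hasDerivAt_abs_rpow_mul {α : ℝ} (hα : 0 < α) (k : ℝ) :
    HasDerivAt (fun u : ℝ => |u| ^ α * u) ((α + 1) * |k| ^ α) k := by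
  rcases lt_trichotomy k 0 with hk | hk | hk
  · -- k < 0
    have hne : -k ≠ 0 := by simpa using hk.ne
    have h1 : HasDerivAt (fun y : ℝ => y ^ α) (α * (-k) ^ (α - 1)) (-k) :=
      Real.hasDerivAt_rpow_const (Or.inl hne)
    have h2 : HasDerivAt (fun u : ℝ => (-u) ^ α) (α * (-k) ^ (α - 1) * (-1)) k :=
      h1.comp k (hasDerivAt_neg k)
    have h3 : HasDerivAt (fun u : ℝ => (-u) ^ α * u)
        (α * (-k) ^ (α - 1) * (-1) * k + (-k) ^ α * 1) k :=
      h2.mul (hasDerivAt_id k)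
    have heq : (fun u : ℝ => (-u) ^ α * u) =ᶠ[nhds k] (fun u : ℝ => |u| ^ α * u) := by
      filter_upwards [Iio_mem_nhds hk] with u hu
      rw [abs_of_neg hu]
    have hval : α * (-k) ^ (α - 1) * (-1) * k + (-k) ^ α * 1 = (α + 1) * |k| ^ α := by
      rw [abs_of_neg hk]
      have : (-k) ^ (α - 1) * (-k) = (-k) ^ α := by
        rw [← Real.rpow_add_one hne, sub_add_cancel]
      ring_nf
      ring_nf at this
      nlinarith [this]
    rw [← hval]
    exact h3.congr_of_eventuallyEq heq.symm
  · -- k = 0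
    subst hk
    have hval : (α + 1) * |(0:ℝ)| ^ α = 0 := by
      rw [abs_zero, Real.zero_rpow hα.ne', mul_zero]
    rw [hval]
    rw [hasDerivAt_iff_tendsto_slope]
    have : Tendsto (fun u : ℝ => |u| ^ α) (nhds 0) (nhds 0) := by
      have hc : ContinuousAt (fun x : ℝ => x ^ α) |(0:ℝ)| := by
        rw [abs_zero]; exact Real.continuousAt_rpow_const 0 α (Or.inr hα.le)
      have h2 := hc.comp (continuous_abs.continuousAt (x := (0:ℝ)))
      simpa [ContinuousAt, Function.comp_def, Real.zero_rpow hα.ne'] using h2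
    refine (this.mono_left nhdsWithin_le_nhds).congr' ?_
    filter_upwards [self_mem_nhdsWithin] with u (hu : u ≠ 0)
    simp only [slope, vsub_eq_sub, sub_zero, abs_zero, Real.zero_rpow hα.ne',
      zero_mul, smul_eq_mul]
    field_simp
  · -- k > 0
    have hne : k ≠ 0 := hk.ne'
    have h1 : HasDerivAt (fun y : ℝ => y ^ (α + 1)) ((α + 1) * k ^ (α + 1 - 1)) k :=
      Real.hasDerivAt_rpow_const (Or.inl hne)
    have heq : (fun u : ℝ => u ^ (α + 1)) =ᶠ[nhds k] (fun u : ℝ => |u| ^ α * u) := by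
      filter_upwards [Ioi_mem_nhds hk] with u hu
      rw [abs_of_pos hu, Real.rpow_add_one (ne_of_gt hu)]
    have hval : (α + 1) * k ^ (α + 1 - 1) = (α + 1) * |k| ^ α := by
      rw [abs_of_pos hk, add_sub_cancel_right]
    rw [← hval]
    exact h1.congr_of_eventuallyEq heq.symm

end aux

noncomputable def Fnl (N : ℕ) (u : ℝ) : ℝ :=
  (((N : ℝ) - 2) / (2 * (N : ℝ))) * |u| ^ (2 * (N : ℝ) / ((N : ℝ) - 2))

noncomputable def fnl (N : ℕ) (u : ℝ) : ℝ :=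
  |u| ^ ((4 : ℝ) / ((N : ℝ) - 2)) * u

noncomputable def fprime (N : ℕ) (u : ℝ) : ℝ :=
  (((N : ℝ) + 2) / ((N : ℝ) - 2)) * |u| ^ ((4 : ℝ) / ((N : ℝ) - 2))

section derivs

variable {N : ℕ} (hN : 6 ≤ N)

lemma hN2 (hN : 6 ≤ N) : (4 : ℝ) ≤ (N : ℝ) - 2 := by
  have : (6 : ℝ) ≤ (N : ℝ) := by exact_mod_cast hN
  linarith

lemma alpha_pos (hN : 6 ≤ N) : 0 < (4 : ℝ) / ((N : ℝ) - 2) := by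
  have := hN2 hN; positivity

lemma alpha_le_one (hN : 6 ≤ N) : (4 : ℝ) / ((N : ℝ) - 2) ≤ 1 := by
  have h := hN2 hN
  rw [div_le_one (by linarith)]
  linarith

lemma hasDerivAt_fnl (hN : 6 ≤ N) (k : ℝ) : HasDerivAt (fnl N) (fprime N k) k := by
  have h := hN2 hN
  have h1 := hasDerivAt_abs_rpow_mul (alpha_pos hN) k
  have : ((4 : ℝ) / ((N : ℝ) - 2) + 1) * |k| ^ ((4 : ℝ) / ((N : ℝ) - 2)) = fprime N k := by
    unfold fprime
    congr 1
    field_simp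
    ring
  rw [this] at h1
  exact h1

lemma hasDerivAt_Fnl (hN : 6 ≤ N) (k : ℝ) : HasDerivAt (Fnl N) (fnl N k) k := by
  have h := hN2 hN
  have hne : (N : ℝ) - 2 ≠ 0 := by linarith
  have hNne : (N : ℝ) ≠ 0 := by linarith
  set α : ℝ := (4 : ℝ) / ((N : ℝ) - 2) with hαdef
  have hα := alpha_pos hN
  have hfun : Fnl N = fun u : ℝ =>
      (((N : ℝ) - 2) / (2 * (N : ℝ))) * ((|u| ^ α * u) * u) := by
    funext u
    unfold Fnl
    congr 1
    rcases eq_or_ne u 0 with rfl | hu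
    · rw [abs_zero, Real.zero_rpow (by positivity), Real.zero_rpow hα.ne']
      ring
    · have hexp : 2 * (N : ℝ) / ((N : ℝ) - 2) = α + 2 := by
        rw [hαdef]; field_simp; ring
      rw [hexp, Real.rpow_add (abs_pos.mpr hu), mul_assoc]
      congr 1
      rw [show (2 : ℝ) = ((2 : ℕ) : ℝ) by norm_num, Real.rpow_natCast, sq_abs, sq]
  have h1 := ((hasDerivAt_abs_rpow_mul hα k).mul (hasDerivAt_id k)).const_mul
    (((N : ℝ) - 2) / (2 * (N : ℝ)))
  rw [hfun]
  refine h1.congr_deriv (Eq.symm ?_)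
  unfold fnl
  simp only [id_eq, mul_one]
  have hc1 : ((N : ℝ) - 2) / (2 * (N : ℝ)) * ((4 : ℝ) / ((N : ℝ) - 2) + 2) = 1 := by
    field_simp
    ring
  linear_combination (-(|k| ^ ((4 : ℝ) / ((N : ℝ) - 2)) * k)) * hc1

lemma fprime_holder (hN : 6 ≤ N) (a b : ℝ) :
    |fprime N a - fprime N b| ≤
      (((N : ℝ) + 2) / ((N : ℝ) - 2)) * |a - b| ^ ((4 : ℝ) / ((N : ℝ) - 2)) := by
  have h := hN2 hN
  have hc : (0 : ℝ) ≤ ((N : ℝ) + 2) / ((N : ℝ) - 2) := by positivity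
  unfold fprime
  rw [← mul_sub, abs_mul, abs_of_nonneg hc]
  exact mul_le_mul_of_nonneg_left
    (abs_rpow_holder (alpha_pos hN).le (alpha_le_one hN) a b) hc

end derivs

theorem F_taylor_highdim (N : ℕ) (hN : 6 ≤ N) :
    ∃ C > (0 : ℝ), ∀ k l : ℝ,
      |Fnl N (k + l) - Fnl N k - fnl N k * l - (1 / 2) * fprime N k * l ^ 2| ≤
        C * |l| ^ (2 * (N : ℝ) / ((N : ℝ) - 2)) := by
  have h4 := hN2 hN
  have hne : (N : ℝ) - 2 ≠ 0 := by linarith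
  set α : ℝ := (4 : ℝ) / ((N : ℝ) - 2) with hαdef
  have hα := alpha_pos hN
  set c : ℝ := ((N : ℝ) + 2) / ((N : ℝ) - 2) with hcdef
  have hcpos : 0 < c := by rw [hcdef]; positivity
  have hexp : 2 * (N : ℝ) / ((N : ℝ) - 2) = α + 2 := by
    rw [hαdef]; field_simp; ring
  -- Step 1: first-order Taylor estimate for fnl
  have step1 : ∀ k l : ℝ, |fnl N (k + l) - fnl N k - fprime N k * l| ≤ c * |l| ^ α * |l| := by
    intro k l
    have hderiv : ∀ t ∈ Set.Icc (0 : ℝ) 1,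
        HasDerivWithinAt (fun t : ℝ => fnl N (k + t * l) - fprime N k * (t * l))
          ((fprime N (k + t * l) - fprime N k) * l) (Set.Icc (0 : ℝ) 1) t := by
      intro t ht
      have hin : HasDerivAt (fun t : ℝ => k + t * l) l t :=
        (hasDerivAt_mul_const l).const_add k
      have h1 : HasDerivAt (fun t : ℝ => fnl N (k + t * l)) (fprime N (k + t * l) * l) t :=
        by have := (hasDerivAt_fnl hN (k + t * l)).comp t hin; exact this
      have h2 : HasDerivAt (fun t : ℝ => fprime N k * (t * l)) (fprime N k * l) t := by
        simpa using ((hasDerivAt_mul_const l).const_mul (fprime N k))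
      have := h1.sub h2
      have heq : (fprime N (k + t * l) - fprime N k) * l =
          fprime N (k + t * l) * l - fprime N k * l := by ring
      rw [heq]
      exact this.hasDerivWithinAt
    have hbound : ∀ t ∈ Set.Ico (0 : ℝ) 1,
        ‖(fprime N (k + t * l) - fprime N k) * l‖ ≤ c * |l| ^ α * |l| := by
      intro t ht
      rw [Real.norm_eq_abs, abs_mul]
      have h1 : |fprime N (k + t * l) - fprime N k| ≤ c * |t * l| ^ α := by
        have := fprime_holder hN (k + t * l) k
        simpa [add_sub_cancel_left] using this
      have h2 : |t * l| ^ α ≤ |l| ^ α := by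
        apply Real.rpow_le_rpow (abs_nonneg _) _ hα.le
        rw [abs_mul, abs_of_nonneg ht.1]
        nlinarith [abs_nonneg l, ht.2.le]
      have := mul_le_mul_of_nonneg_left h2 hcpos.le
      nlinarith [abs_nonneg l, abs_nonneg (fprime N (k + t * l) - fprime N k),
        Real.rpow_nonneg (abs_nonneg (t * l)) α]
    have key := norm_image_sub_le_of_norm_deriv_le_segment_01' hderiv hbound
    simp only [Real.norm_eq_abs, one_mul, zero_mul, mul_zero, add_zero, sub_zero] at key
    convert key using 2
    ring
  -- Step 2: second-order Taylor estimate for Fnl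
  refine ⟨c, hcpos, fun k l => ?_⟩
  rcases eq_or_ne l 0 with rfl | hl
  · simp [Real.zero_rpow (by rw [hexp]; positivity : 2 * (N : ℝ) / ((N : ℝ) - 2) ≠ 0)]
  have hderiv : ∀ t ∈ Set.Icc (0 : ℝ) 1,
      HasDerivWithinAt (fun t : ℝ =>
          Fnl N (k + t * l) - fnl N k * (t * l) - (1 / 2) * fprime N k * (t * l) ^ 2)
        ((fnl N (k + t * l) - fnl N k - fprime N k * (t * l)) * l) (Set.Icc (0 : ℝ) 1) t := by
    intro t ht
    have hin : HasDerivAt (fun t : ℝ => k + t * l) l t :=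
      (hasDerivAt_mul_const l).const_add k
    have h1 : HasDerivAt (fun t : ℝ => Fnl N (k + t * l)) (fnl N (k + t * l) * l) t :=
      by have := (hasDerivAt_Fnl hN (k + t * l)).comp t hin; exact this
    have h2 : HasDerivAt (fun t : ℝ => fnl N k * (t * l)) (fnl N k * l) t := by
      simpa using ((hasDerivAt_mul_const l).const_mul (fnl N k))
    have h3 : HasDerivAt (fun t : ℝ => (1 / 2) * fprime N k * (t * l) ^ 2)
        (fprime N k * (t * l) * l) t := by
      have hb : HasDerivAt (fun t : ℝ => (t * l) ^ 2) (2 * (t * l) * l) t := by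
        have := ((hasDerivAt_mul_const l).pow 2 (x := t))
        simpa [Pi.pow_def, mul_comm, mul_assoc, mul_left_comm] using this
      have := hb.const_mul ((1 / 2) * fprime N k)
      refine this.congr_deriv ?_
      ring
    have := (h1.sub h2).sub h3
    have heq : (fnl N (k + t * l) - fnl N k - fprime N k * (t * l)) * l =
        fnl N (k + t * l) * l - fnl N k * l - fprime N k * (t * l) * l := by ring
    rw [heq]
    exact this.hasDerivWithinAt
  have hbound : ∀ t ∈ Set.Ico (0 : ℝ) 1,
      ‖(fnl N (k + t * l) - fnl N k - fprime N k * (t * l)) * l‖ ≤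
        (c * |l| ^ α * |l|) * |l| := by
    intro t ht
    rw [Real.norm_eq_abs, abs_mul]
    have h1 := step1 k (t * l)
    have h2 : |t * l| ^ α ≤ |l| ^ α := by
      apply Real.rpow_le_rpow (abs_nonneg _) _ hα.le
      rw [abs_mul, abs_of_nonneg ht.1]
      nlinarith [abs_nonneg l, ht.2.le]
    have h3 : |t * l| ≤ |l| := by
      rw [abs_mul, abs_of_nonneg ht.1]
      nlinarith [abs_nonneg l, ht.2.le]
    have h4' : c * |t * l| ^ α * |t * l| ≤ c * |l| ^ α * |l| :=
      mul_le_mul (mul_le_mul_of_nonneg_left h2 hcpos.le) h3 (abs_nonneg _)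
        (mul_nonneg hcpos.le (Real.rpow_nonneg (abs_nonneg l) α))
    exact mul_le_mul_of_nonneg_right (h1.trans h4') (abs_nonneg l)
  have key := norm_image_sub_le_of_norm_deriv_le_segment_01' hderiv hbound
  simp only [Real.norm_eq_abs, one_mul, zero_mul, mul_zero, add_zero, sub_zero] at key
  have hRHS : c * |l| ^ α * |l| * |l| = c * |l| ^ (2 * (N : ℝ) / ((N : ℝ) - 2)) := by
    rw [hexp, Real.rpow_add (abs_pos.mpr hl)]
    rw [show (2 : ℝ) = ((2 : ℕ) : ℝ) by norm_num, Real.rpow_natCast]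
    ring
  rw [← hRHS]
  convert key using 2
  ring
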